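/- Let F be a face of Q, let a_F ∈ F satisfy a_F + Q^F ⊆ Q, and let a ∈ F. Suppose β ∈ ℤ^d satisfies τ_i(a + a_F + β) ≤ 0 for every index i such that τ_i does not vanish identically on F. Then (β + Q) ∩ Q = (a + β + Q) ∩ Q. -/
import Mathlib


/-- The shift `α + S = {α + s : s ∈ S}` of a set `S ⊆ ℤ^d` by `α ∈ ℤ^d`. -/
def shiftSet {d : ℕ} (α : Fin d → ℤ) (S : Set (Fin d → ℤ)) : Set (Fin d → ℤ) :=
  (α + ·) '' S

/-- A face of `Q`: a submonoid `F ⊆ Q` such that `a + b ∈ F` with `a, b ∈ Q` forces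
`a ∈ F` and `b ∈ F`. -/
def IsFaceOfMonoid {d : ℕ} (Q F : AddSubmonoid (Fin d → ℤ)) : Prop :=
  (F : Set (Fin d → ℤ)) ⊆ (Q : Set (Fin d → ℤ)) ∧
    ∀ a ∈ Q, ∀ b ∈ Q, a + b ∈ F → a ∈ F ∧ b ∈ F

/-- The saturation `Q^sat = {x ∈ ℤ^d : n • x ∈ Q for some integer n ≥ 1}`. -/
def saturationOf {d : ℕ} (Q : AddSubmonoid (Fin d → ℤ)) : Set (Fin d → ℤ) :=
  {x | ∃ n : ℕ, 1 ≤ n ∧ n • x ∈ Q}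

/-- The partial saturation `Q^F = (Q + F^gp) ∩ Q^sat` of `Q` at a face `F`. -/
def partialSat {d : ℕ} (Q F : AddSubmonoid (Fin d → ℤ)) : Set (Fin d → ℤ) :=
  {x | ∃ q ∈ Q, ∃ g ∈ AddSubgroup.closure (F : Set (Fin d → ℤ)), x = q + g} ∩
    saturationOf Q

/-- Let `F` be a face of `Q`, let `a_F ∈ F` satisfy `a_F + Q^F ⊆ Q`, and let `a ∈ F`.
Suppose `β ∈ ℤ^d` satisfies `τ_i(a + a_F + β) ≤ 0` for every `i` such that `τ_i` does
not vanish identically on `F`.  Then `(β + Q) ∩ Q = (a + β + Q) ∩ Q`. -/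
theorem stmt10 {d r : ℕ} (Q : AddSubmonoid (Fin d → ℤ)) (hFG : Q.FG)
    (hgp : AddSubgroup.closure (Q : Set (Fin d → ℤ)) = ⊤)
    (τ : Fin r → ((Fin d → ℤ) →+ ℤ))
    (hτQ : ∀ i, ∀ x ∈ Q, 0 ≤ τ i x)
    (hsat : saturationOf Q = {x : Fin d → ℤ | ∀ i, 0 ≤ τ i x})
    (F : AddSubmonoid (Fin d → ℤ)) (hF : IsFaceOfMonoid Q F)
    (aF : Fin d → ℤ) (haF : aF ∈ F)
    (haFQ : ∀ x ∈ partialSat Q F, aF + x ∈ Q)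
    (a : Fin d → ℤ) (ha : a ∈ F)
    (β : Fin d → ℤ)
    (hβ : ∀ i, ¬ (∀ x ∈ F, τ i x = 0) → τ i (a + aF + β) ≤ 0) :
    shiftSet β (Q : Set (Fin d → ℤ)) ∩ (Q : Set (Fin d → ℤ)) =
      shiftSet (a + β) (Q : Set (Fin d → ℤ)) ∩ (Q : Set (Fin d → ℤ)) := by
  ext x
  simp only [Set.mem_inter_iff, shiftSet, Set.mem_image, SetLike.mem_coe]
  constructor
  · rintro ⟨⟨q, hq, rfl⟩, hx⟩
    have hy : q - a - aF ∈ partialSat Q F := by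
      constructor
      · exact ⟨q, hq, -(a + aF),
          neg_mem (add_mem (AddSubgroup.subset_closure ha)
            (AddSubgroup.subset_closure haF)), by abel⟩
      · rw [hsat]
        intro i
        by_cases h : ∀ x ∈ F, τ i x = 0
        · have h1 := h a ha
          have h2 := h aF haF
          have h3 := hτQ i q hq
          simp only [map_sub]
          omega
        · have h1 := hβ i h
          have h2 := hτQ i (β + q) hx
          simp only [map_add, map_sub] at *
          omega
    have := haFQ _ hy
    have hqa : q - a ∈ Q := by
      have e : aF + (q - a - aF) = q - a := by abel
      rwa [e] at this
    exact ⟨⟨q - a, hqa, by abel⟩, hx⟩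
  · rintro ⟨⟨q, hq, rfl⟩, hx⟩
    exact ⟨⟨a + q, Q.add_mem (hF.1 ha) hq, by abel⟩, hx⟩
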